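/- If f, g : Γ₁ → Γ₂ are two contractions between marked n-trees, then f = g. In particular, a contraction between two marked n-trees, if it exists, is unique. -/

import Mathlib

/-- A marked `n`-tree: a finite tree with `n` labeled marked vertices such that
every vertex of valence (degree) `1` or `2` is marked. -/
structure MarkedTree (n : ℕ) where
  V : Type
  fintypeV : Fintype V
  G : SimpleGraph V
  isTree : G.IsTree
  mark : Fin n → V
  mark_inj : Function.Injective mark
  degCond : ∀ v : V, (G.neighborSet v).ncard ≤ 2 → v ∈ Set.range mark

/-- A contraction of marked `n`-trees: a surjective cellular (simplicial) map such that
the preimage of every vertex is a subtree (nonempty connected), and marked vertices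
map to the corresponding marked vertices. -/
structure TreeContraction {n : ℕ} (T₁ T₂ : MarkedTree n) where
  f : T₁.V → T₂.V
  surj : Function.Surjective f
  map_adj : ∀ {a b : T₁.V}, T₁.G.Adj a b → f a = f b ∨ T₂.G.Adj (f a) (f b)
  fiber_conn : ∀ w : T₂.V, (T₁.G.induce (f ⁻¹' {w})).Connected
  map_mark : ∀ i, f (T₁.mark i) = T₂.mark i

/-- The contracted subforest `F(T₁,T₂)` of a contraction: the set of edges of `T₁`
whose endpoints are identified by the contraction. -/
def TreeContraction.forest {n : ℕ} {T₁ T₂ : MarkedTree n} (c : TreeContraction T₁ T₂) :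
    Set (Sym2 T₁.V) :=
  {e | ∃ a b : T₁.V, e = s(a, b) ∧ T₁.G.Adj a b ∧ c.f a = c.f b}

/-- A label-preserving isomorphism of marked `n`-trees. -/
structure MarkedIso {n : ℕ} (T₁ T₂ : MarkedTree n) where
  e : T₁.V ≃ T₂.V
  adj_iff : ∀ a b : T₁.V, T₁.G.Adj a b ↔ T₂.G.Adj (e a) (e b)
  map_mark : ∀ i, e (T₁.mark i) = T₂.mark i



open SimpleGraph

variable {V W : Type}

/-- `x` is on the `a`-side of the edge `{a,b}`. -/
def sideOf (G : SimpleGraph V) (a b x : V) : Prop :=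
  (G.deleteEdges {s(a, b)}).Reachable a x

lemma swap_singleton (a b : V) : ({s(b, a)} : Set (Sym2 V)) = {s(a, b)} := by
  rw [Sym2.eq_swap]

/-- Any walk between adjacent vertices of a tree passes through the edge. -/
lemma edge_mem_of_walk {G : SimpleGraph V} (hT : G.IsTree) {a b : V} (hab : G.Adj a b)
    (w : G.Walk a b) : s(a, b) ∈ w.edges := by
  classical
  have h1 : (Walk.cons hab (Walk.nil)).IsPath := by simp [hab.ne]
  have h2 := (hT.existsUnique_path a b).unique h1 w.bypass_isPath
  apply w.edges_bypass_subset
  rw [← h2]; simp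

/-- Deleting an edge of a tree disconnects its endpoints. -/
lemma not_reachable_delete {G : SimpleGraph V} (hT : G.IsTree) {a b : V} (hab : G.Adj a b) :
    ¬ (G.deleteEdges {s(a, b)}).Reachable a b := by
  rintro ⟨p⟩
  have hsub : ∀ e ∈ p.edges, e ∈ G.edgeSet := by
    intro e he
    have := p.edges_subset_edgeSet he
    rw [edgeSet_deleteEdges] at this
    exact this.1
  have hmem := edge_mem_of_walk hT hab (p.transfer G hsub)
  rw [p.edges_transfer hsub] at hmem
  have := p.edges_subset_edgeSet hmem
  rw [edgeSet_deleteEdges] at this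
  exact this.2 rfl

lemma not_sideOf_both {G : SimpleGraph V} (hT : G.IsTree) {a b : V} (hab : G.Adj a b)
    (x : V) : ¬ (sideOf G a b x ∧ sideOf G b a x) := by
  rintro ⟨h1, h2⟩
  unfold sideOf at h2
  rw [swap_singleton] at h2
  exact not_reachable_delete hT hab (h1.trans h2.symm)

/-- After deleting one edge, every vertex is reachable from one of its endpoints. -/
lemma sideOf_or {G : SimpleGraph V} (hc : G.Connected) (a b x : V) :
    sideOf G a b x ∨ sideOf G b a x := by
  have key : ∀ {u y : V} (_ : G.Walk u y),
      ((G.deleteEdges {s(a, b)}).Reachable a u ∨ (G.deleteEdges {s(a, b)}).Reachable b u) →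
      ((G.deleteEdges {s(a, b)}).Reachable a y ∨ (G.deleteEdges {s(a, b)}).Reachable b y) := by
    intro u y w
    induction w with
    | nil => exact id
    | @cons u v y h p ih =>
      intro hu
      apply ih
      by_cases he : s(u, v) = s(a, b)
      · rw [Sym2.eq_iff] at he
        rcases he with ⟨rfl, rfl⟩ | ⟨rfl, rfl⟩
        · exact Or.inr (Reachable.refl _)
        · exact Or.inl (Reachable.refl _)
      · have hadj : (G.deleteEdges {s(a, b)}).Adj u v := by
          rw [deleteEdges_adj]
          exact ⟨h, by simpa using he⟩
        rcases hu with h1 | h1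
        · exact Or.inl (h1.trans hadj.reachable)
        · exact Or.inr (h1.trans hadj.reachable)
  obtain ⟨w⟩ := hc a x
  rcases key w (Or.inl (Reachable.refl a)) with h | h
  · exact Or.inl h
  · right
    unfold sideOf
    rw [swap_singleton]
    exact h

/-- Mapping a walk through a "contraction-like" map. -/
lemma exists_image_walk {G : SimpleGraph V} {H : SimpleGraph W} {f : V → W}
    (hf : ∀ {a b : V}, G.Adj a b → f a = f b ∨ H.Adj (f a) (f b)) {x y : V} (p : G.Walk x y) :
    ∃ q : H.Walk (f x) (f y), ∀ e ∈ q.edges, ∃ u v : V, s(u, v) ∈ p.edges ∧ e = s(f u, f v) := by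
  induction p with
  | nil => exact ⟨Walk.nil, by simp⟩
  | @cons u v y h p ih =>
    obtain ⟨q, hq⟩ := ih
    rcases hf h with he | he
    · refine ⟨q.copy he.symm rfl, ?_⟩
      intro e hee
      rw [Walk.edges_copy] at hee
      obtain ⟨u', v', h1, h2⟩ := hq e hee
      exact ⟨u', v', by simp [h1], h2⟩
    · refine ⟨Walk.cons he q, ?_⟩
      intro e hee
      rw [Walk.edges_cons, List.mem_cons] at hee
      rcases hee with rfl | hee
      · exact ⟨u, v, by simp, rfl⟩
      · obtain ⟨u', v', h1, h2⟩ := hq e hee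
        exact ⟨u', v', by simp [h1], h2⟩

/-- A walk in an induced subgraph yields a walk with support in the set. -/
lemma exists_walk_support_subset {G : SimpleGraph V} {s : Set V} {x y : ↥s}
    (h : (G.induce s).Reachable x y) :
    ∃ w : G.Walk x.1 y.1, ∀ v ∈ w.support, v ∈ s := by
  obtain ⟨p⟩ := h
  induction p with
  | nil => exact ⟨Walk.nil, by simp⟩
  | @cons u v y h p ih =>
    obtain ⟨w, hw⟩ := ih
    refine ⟨Walk.cons (by simpa using h) w, ?_⟩
    intro t ht
    rw [Walk.support_cons, List.mem_cons] at ht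
    rcases ht with rfl | ht
    · exact u.2
    · exact hw t ht

/-- In a tree, every path realizes the distance. -/
lemma isPath_length_eq_dist {G : SimpleGraph V} (hT : G.IsTree) {u v : V}
    (p : G.Walk u v) (hp : p.IsPath) : p.length = G.dist u v := by
  classical
  obtain ⟨w, hw⟩ := (hT.isConnected u v).exists_walk_length_eq_dist
  have h1 := (hT.existsUnique_path u v).unique hp w.bypass_isPath
  have h2 : p.length ≤ G.dist u v := by
    rw [h1, ← hw]
    exact w.length_bypass_le
  exact le_antisymm h2 (SimpleGraph.dist_le p)

/-- Crossing edges between two adjacent fibers are unique (with orientation). -/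
lemma crossing_unique {n : ℕ} {T₁ T₂ : MarkedTree n} (c : TreeContraction T₁ T₂)
    {a b a' b' : T₁.V} (hab : T₁.G.Adj a b) (hab' : T₁.G.Adj a' b')
    (hW : T₂.G.Adj (c.f a) (c.f b)) (ha : c.f a' = c.f a) (hb : c.f b' = c.f b) :
    a' = a ∧ b' = b := by
  have h₁ : (T₁.G.induce (c.f ⁻¹' {c.f a})).Reachable ⟨a, rfl⟩ ⟨a', ha⟩ :=
    (c.fiber_conn (c.f a)).preconnected _ _
  have h₂ : (T₁.G.induce (c.f ⁻¹' {c.f b})).Reachable ⟨b', hb⟩ ⟨b, rfl⟩ :=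
    (c.fiber_conn (c.f b)).preconnected _ _
  obtain ⟨w₁, hw₁⟩ := exists_walk_support_subset h₁
  obtain ⟨w₂, hw₂⟩ := exists_walk_support_subset h₂
  have hmem := edge_mem_of_walk T₁.isTree hab (w₁.append (Walk.cons hab' w₂))
  rw [Walk.edges_append, List.mem_append, Walk.edges_cons, List.mem_cons] at hmem
  rcases hmem with hmem | hmem | hmem
  · exfalso
    have := hw₁ b (w₁.snd_mem_support_of_mem_edges hmem)
    exact hW.ne' this
  · rw [Sym2.eq_iff] at hmem
    rcases hmem with ⟨h1, h2⟩ | ⟨h1, h2⟩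
    · exact ⟨h1.symm, h2.symm⟩
    · exfalso
      have : c.f a = c.f b := by rw [h1, hb]
      exact hW.ne this
  · exfalso
    have := hw₂ a (w₂.fst_mem_support_of_mem_edges hmem)
    exact hW.ne this

/-- Every edge of the target has a crossing edge upstairs. -/
lemma crossing_exists {n : ℕ} {T₁ T₂ : MarkedTree n} (c : TreeContraction T₁ T₂)
    {w w' : T₂.V} (h : T₂.G.Adj w w') :
    ∃ a b : T₁.V, T₁.G.Adj a b ∧ c.f a = w ∧ c.f b = w' := by
  obtain ⟨x, rfl⟩ := c.surj w
  obtain ⟨y, rfl⟩ := c.surj w'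
  obtain ⟨p⟩ := T₁.isTree.isConnected x y
  obtain ⟨q, hq⟩ := exists_image_walk (fun hab => c.map_adj hab) p
  obtain ⟨u, v, h1, h2⟩ := hq _ (edge_mem_of_walk T₂.isTree h q)
  have huv : T₁.G.Adj u v := p.adj_of_mem_edges h1
  rw [Sym2.eq_iff] at h2
  rcases h2 with ⟨h3, h4⟩ | ⟨h3, h4⟩
  · exact ⟨u, v, huv, h3.symm, h4.symm⟩
  · exact ⟨v, u, huv.symm, h3.symm, h4.symm⟩

/-- Contractions map sides to sides. -/
lemma sideOf_map {n : ℕ} {T₁ T₂ : MarkedTree n} (c : TreeContraction T₁ T₂) {a b : T₁.V}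
    (hab : T₁.G.Adj a b) (hW : T₂.G.Adj (c.f a) (c.f b)) {x : T₁.V}
    (hx : sideOf T₁.G a b x) : sideOf T₂.G (c.f a) (c.f b) (c.f x) := by
  obtain ⟨p₀⟩ := hx
  have hsub : ∀ e ∈ p₀.edges, e ∈ T₁.G.edgeSet := by
    intro e he
    have := p₀.edges_subset_edgeSet he
    rw [edgeSet_deleteEdges] at this
    exact this.1
  set p := p₀.transfer T₁.G hsub with hpdef
  have hpe : s(a, b) ∉ p.edges := by
    rw [hpdef, p₀.edges_transfer hsub]
    intro hmem
    have := p₀.edges_subset_edgeSet hmem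
    rw [edgeSet_deleteEdges] at this
    exact this.2 rfl
  obtain ⟨q, hq⟩ := exists_image_walk (fun h => c.map_adj h) p
  have hqe : ∀ e ∈ q.edges, e ∉ ({s(c.f a, c.f b)} : Set (Sym2 T₂.V)) := by
    intro e he
    obtain ⟨u, v, h1, h2⟩ := hq e he
    have huv := p.adj_of_mem_edges h1
    rw [Set.mem_singleton_iff]
    intro heq
    rw [h2, Sym2.eq_iff] at heq
    rcases heq with ⟨h3, h4⟩ | ⟨h3, h4⟩
    · obtain ⟨rfl, rfl⟩ := crossing_unique c hab huv hW h3 h4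
      exact hpe h1
    · obtain ⟨rfl, rfl⟩ := crossing_unique c hab.symm huv hW.symm h3 h4
      rw [Sym2.eq_swap] at h1
      exact hpe h1
  exact ⟨q.toDeleteEdges _ hqe⟩

lemma sideOf_map_iff {n : ℕ} {T₁ T₂ : MarkedTree n} (c : TreeContraction T₁ T₂) {a b : T₁.V}
    (hab : T₁.G.Adj a b) (hW : T₂.G.Adj (c.f a) (c.f b)) (x : T₁.V) :
    sideOf T₁.G a b x ↔ sideOf T₂.G (c.f a) (c.f b) (c.f x) := by
  constructor
  · exact sideOf_map c hab hW
  · intro h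
    rcases sideOf_or T₁.isTree.isConnected a b x with h1 | h1
    · exact h1
    · exfalso
      have h3 := sideOf_map c hab.symm hW.symm h1
      exact not_sideOf_both T₂.isTree hW (c.f x) ⟨h, h3⟩

/-- If two edges of a marked tree have the same marks on corresponding sides, then the
"middle region" (`a`-side of `{a,b}` intersected with `b'`-side of `{a',b'}`) is empty. -/
lemma no_middle {n : ℕ} (T : MarkedTree n) {a b a' b' : T.V}
    (hab : T.G.Adj a b) (hab' : T.G.Adj a' b')
    (hmk : ∀ i, sideOf T.G a b (T.mark i) ↔ sideOf T.G a' b' (T.mark i)) :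
    ¬ ∃ x, sideOf T.G a b x ∧ sideOf T.G b' a' x := by
  classical
  letI := T.fintypeV
  have hT := T.isTree
  rintro ⟨x, hx⟩
  set M : Set T.V := {y | sideOf T.G a b y ∧ sideOf T.G b' a' y} with hMdef
  -- M is closed under adjacency except through the two edges
  have hclose : ∀ y z, y ∈ M → T.G.Adj y z → s(y, z) ≠ s(a, b) → s(y, z) ≠ s(a', b') → z ∈ M := by
    intro y z hy hyz h1 h2
    constructor
    · refine hy.1.trans (Adj.reachable ?_)
      rw [deleteEdges_adj]
      exact ⟨hyz, by simpa using h1⟩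
    · refine hy.2.trans (Adj.reachable ?_)
      rw [deleteEdges_adj, swap_singleton]
      exact ⟨hyz, by simpa using h2⟩
  -- no marked vertex lies in M
  have hnomark : ∀ i, T.mark i ∉ M := by
    intro i hi
    have h1 := (hmk i).1 hi.1
    exact not_sideOf_both hT hab' (T.mark i) ⟨h1, hi.2⟩
  -- b and a' are not in M
  have hbM : b ∉ M := fun h => not_reachable_delete hT hab h.1
  have ha'M : a' ∉ M := by
    intro h
    have := h.2
    unfold sideOf at this
    rw [swap_singleton] at this
    exact not_reachable_delete hT hab' this.symm
  -- pick an element of M at maximal distance from a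
  obtain ⟨x₀, hx₀mem, hmax⟩ :=
    (Finset.univ.filter (· ∈ M)).exists_max_image (T.G.dist a ·)
      ⟨x, by simp only [Finset.mem_filter, Finset.mem_univ, true_and]; exact hx⟩
  have hx₀M : x₀ ∈ M := by simpa using hx₀mem
  have hmax' : ∀ y ∈ M, T.G.dist a y ≤ T.G.dist a x₀ := fun y hy =>
    hmax y (by simpa using hy)
  -- x₀ has at most two neighbors
  have hnbhd : ∃ y₁ y₂ : T.V, T.G.neighborSet x₀ ⊆ {y₁, y₂} := by
    by_cases hxa : x₀ = a
    · refine ⟨b, a', ?_⟩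
      intro y hy
      rw [mem_neighborSet] at hy
      by_cases h1 : s(x₀, y) = s(a, b)
      · rw [Sym2.eq_iff] at h1
        rcases h1 with ⟨h2, h3⟩ | ⟨h2, h3⟩
        · simp [h3]
        · exact absurd (hxa.symm.trans h2) hab.ne
      · by_cases h2 : s(x₀, y) = s(a', b')
        · rw [Sym2.eq_iff] at h2
          rcases h2 with ⟨h3, h4⟩ | ⟨h3, h4⟩
          · exact absurd (h3 ▸ hx₀M) ha'M
          · simp [h4]
        · exfalso
          have hyM := hclose x₀ y hx₀M hy h1 h2
          have hle := hmax' y hyM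
          rw [hxa, SimpleGraph.dist_self] at hle
          have hya : a = y := (hT.isConnected.dist_eq_zero_iff).mp (Nat.le_zero.mp hle)
          exact hy.ne (hxa.trans hya)
    · -- x₀ ≠ a : take the unique path from a to x₀; its penultimate vertex
      obtain ⟨p, hp, hup⟩ := hT.existsUnique_path a x₀
      obtain ⟨y₀, hy₀adj, pr, hpr⟩ := Walk.exists_eq_cons_of_ne hxa p.reverse
      refine ⟨y₀, a', ?_⟩
      intro y hy
      rw [mem_neighborSet] at hy
      by_cases h1 : s(x₀, y) = s(a, b)
      · exfalso
        rw [Sym2.eq_iff] at h1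
        rcases h1 with ⟨h2, h3⟩ | ⟨h2, h3⟩
        · exact hxa h2
        · exact hbM (h2 ▸ hx₀M)
      · by_cases h2 : s(x₀, y) = s(a', b')
        · rw [Sym2.eq_iff] at h2
          rcases h2 with ⟨h3, h4⟩ | ⟨h3, h4⟩
          · exact absurd (h3 ▸ hx₀M) ha'M
          · simp [h4]
        · -- y is in M, hence no farther from a than x₀; so y is the penultimate vertex y₀
          have hyM := hclose x₀ y hx₀M hy h1 h2
          have hdy : T.G.dist a y ≤ T.G.dist a x₀ := hmax' y hyM
          left
          by_cases hys : y ∈ p.support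
          · -- dropUntil is the single edge y—x₀
            have hsingle : (Walk.cons hy.symm (Walk.nil)).IsPath := by simp [hy.ne']
            have hdrop : p.dropUntil y hys = Walk.cons hy.symm Walk.nil :=
              (hT.existsUnique_path y x₀).unique (hp.dropUntil hys) hsingle
            have hspec := p.take_spec hys
            have hrev : p.reverse = Walk.cons hy ((p.takeUntil y hys).reverse) := by
              conv_lhs => rw [← hspec]
              rw [Walk.reverse_append, hdrop]
              rw [Walk.reverse_cons]
              simp
            have := congrArg (fun w => Walk.getVert w 1) (hpr.symm.trans hrev)
            simpa using this.symm
          · -- otherwise appending the edge gives a longer path : contradiction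
            exfalso
            have hcpath : (p.concat hy).IsPath := by
              rw [← Walk.isPath_reverse_iff, Walk.reverse_concat]
              rw [Walk.cons_isPath_iff]
              refine ⟨hp.reverse, ?_⟩
              rw [Walk.support_reverse]
              simpa using hys
            have hlen := isPath_length_eq_dist hT _ hcpath
            rw [Walk.length_concat] at hlen
            have hplen := isPath_length_eq_dist hT p hp
            omega
  obtain ⟨y₁, y₂, hsub⟩ := hnbhd
  have hcard : (T.G.neighborSet x₀).ncard ≤ 2 := by
    refine le_trans (Set.ncard_le_ncard hsub (Set.toFinite _)) ?_
    refine le_trans (Set.ncard_insert_le _ _) ?_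
    simp [Set.ncard_singleton]
  obtain ⟨i, hi⟩ := T.degCond x₀ hcard
  exact hnomark i (hi ▸ hx₀M)

/-- In a marked tree, an oriented edge is determined by the set of marks on its sides. -/
lemma side_rigid {n : ℕ} (T : MarkedTree n) {a b a' b' : T.V}
    (hab : T.G.Adj a b) (hab' : T.G.Adj a' b')
    (hmk : ∀ i, sideOf T.G a b (T.mark i) ↔ sideOf T.G a' b' (T.mark i)) :
    a = a' ∧ b = b' := by
  have hT := T.isTree
  have hM₁ := no_middle T hab hab' hmk
  have hM₂ := no_middle T hab' hab (fun i => (hmk i).symm)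
  have hall : ∀ x, sideOf T.G a b x ↔ sideOf T.G a' b' x := by
    intro x
    constructor
    · intro h
      rcases sideOf_or hT.isConnected a' b' x with h1 | h1
      · exact h1
      · exact absurd ⟨x, h, h1⟩ hM₁
    · intro h
      rcases sideOf_or hT.isConnected a b x with h1 | h1
      · exact h1
      · exact absurd ⟨x, h, h1⟩ hM₂
  have hbB : ¬ sideOf T.G a' b' b := by
    intro h
    exact not_reachable_delete hT hab ((hall b).mpr h)
  have haA' : sideOf T.G a' b' a := (hall a).mp (Reachable.refl a)
  by_cases he : s(a, b) = s(a', b')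
  · rw [Sym2.eq_iff] at he
    rcases he with ⟨h1, h2⟩ | ⟨h1, h2⟩
    · exact ⟨h1, h2⟩
    · exfalso
      rw [h1] at haA'
      exact not_reachable_delete hT hab' haA'
  · exfalso
    have hadj : (T.G.deleteEdges {s(a', b')}).Adj a b := by
      rw [deleteEdges_adj]
      exact ⟨hab, by simpa using he⟩
    exact hbB (haA'.trans hadj.reachable)


/-- A contraction between two marked `n`-trees, if it exists, is
unique: any two contractions `Γ₁ → Γ₂` are equal. -/
theorem treeContraction_unique {n : ℕ} (T₁ T₂ : MarkedTree n)
    (c₁ c₂ : TreeContraction T₁ T₂) : c₁.f = c₂.f := by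
  classical
  funext x
  by_contra hne
  obtain ⟨p, hp, hup⟩ := T₂.isTree.existsUnique_path (c₁.f x) (c₂.f x)
  obtain ⟨z, hz, q, rfl⟩ := Walk.exists_eq_cons_of_ne hne p
  have hside : ¬ sideOf T₂.G (c₁.f x) z (c₂.f x) := by
    rintro ⟨r⟩
    have hsub : ∀ e ∈ r.edges, e ∈ T₂.G.edgeSet := by
      intro e he
      have := r.edges_subset_edgeSet he
      rw [edgeSet_deleteEdges] at this
      exact this.1
    have hbp : (r.transfer T₂.G hsub).bypass = Walk.cons hz q :=
      hup _ (Walk.bypass_isPath _)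
    have hmem : s(c₁.f x, z) ∈ (r.transfer T₂.G hsub).edges :=
      (r.transfer T₂.G hsub).edges_bypass_subset (by rw [hbp]; simp)
    rw [r.edges_transfer hsub] at hmem
    have := r.edges_subset_edgeSet hmem
    rw [edgeSet_deleteEdges] at this
    exact this.2 rfl
  obtain ⟨u, v, huv, hu, hv⟩ := crossing_exists c₁ hz
  obtain ⟨u', v', huv', hu', hv'⟩ := crossing_exists c₂ hz
  have K₁ : ∀ i, sideOf T₁.G u v (T₁.mark i) ↔ sideOf T₂.G (c₁.f x) z (T₂.mark i) := by
    intro i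
    have h := sideOf_map_iff c₁ huv (by rw [hu, hv]; exact hz) (T₁.mark i)
    rw [hu, hv, c₁.map_mark] at h
    exact h
  have K₂ : ∀ i, sideOf T₁.G u' v' (T₁.mark i) ↔ sideOf T₂.G (c₁.f x) z (T₂.mark i) := by
    intro i
    have h := sideOf_map_iff c₂ huv' (by rw [hu', hv']; exact hz) (T₁.mark i)
    rw [hu', hv', c₂.map_mark] at h
    exact h
  obtain ⟨hu0, hv0⟩ := side_rigid T₁ huv huv' (fun i => (K₁ i).trans (K₂ i).symm)
  have h1 : sideOf T₁.G u v x := by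
    rw [sideOf_map_iff c₁ huv (by rw [hu, hv]; exact hz) x, hu, hv]
    exact Reachable.refl _
  rw [hu0, hv0] at h1
  have h2 := (sideOf_map_iff c₂ huv' (by rw [hu', hv']; exact hz) x).mp h1
  rw [hu', hv'] at h2
  exact hside h2
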